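/- Let Δ > 0 be real, and for nonnegative integers n define c_n = Γ(Δ+n)² Γ(2Δ+n−1) / [Γ(Δ)² Γ(1+n) Γ(2Δ+2n−1)] (assume 2Δ − 1 > 0). Then c_n · 4^n · n^{3/2 − 2Δ} → √π · 4^{1−Δ} / Γ(Δ)² as n → ∞. -/

import Mathlib

open Filter Topology

lemma gamma_prod_aux (s : ℝ) (hs : 0 < s) (n : ℕ) :
    Real.Gamma s * ∏ j ∈ Finset.range (n + 1), (s + j) = Real.Gamma (s + n + 1) := by
  induction n with
  | zero => simp [mul_comm, ← Real.Gamma_add_one hs.ne']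
  | succ n ih =>
      rw [Finset.prod_range_succ, ← mul_assoc, ih]
      have harg : s + ((n+1 : ℕ) : ℝ) + 1 = s + (n:ℝ) + 1 + 1 := by push_cast; ring
      have hg : Real.Gamma (s + (n:ℝ) + 1 + 1) = (s + (n:ℝ) + 1) * Real.Gamma (s + (n:ℝ) + 1) :=
        Real.Gamma_add_one (by positivity)
      rw [harg, hg]
      push_cast; ring

lemma gamma_key (s : ℝ) (hs : 0 < s) :
    Tendsto (fun n : ℕ => Real.Gamma (s + n + 1) / (Real.Gamma ((n : ℝ) + 1) * (n : ℝ) ^ s))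
      atTop (𝓝 1) := by
  have hG : Real.Gamma s ≠ 0 := (Real.Gamma_pos_of_pos hs).ne'
  have h1 : Tendsto (fun n : ℕ => Real.GammaSeq s n / Real.Gamma s) atTop (𝓝 1) := by
    have := (Real.GammaSeq_tendsto_Gamma s).div_const (Real.Gamma s)
    rwa [div_self hG] at this
  have h2 := h1.inv₀ one_ne_zero
  rw [inv_one] at h2
  refine h2.congr' ?_
  filter_upwards [eventually_gt_atTop 0] with n hn
  have hn' : (0:ℝ) < n := by exact_mod_cast hn
  have hGs : (0:ℝ) < Real.Gamma (s + n + 1) := Real.Gamma_pos_of_pos (by positivity)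
  have hprod : ∏ j ∈ Finset.range (n + 1), (s + j) = Real.Gamma (s + n + 1) / Real.Gamma s := by
    rw [eq_div_iff hG, mul_comm, gamma_prod_aux s hs]
  rw [Real.GammaSeq, hprod, Real.Gamma_nat_eq_factorial]
  have hf : ((n.factorial : ℝ)) ≠ 0 := by exact_mod_cast n.factorial_pos.ne'
  have hp : (0:ℝ) < (n:ℝ) ^ s := Real.rpow_pos_of_pos hn' s
  field_simp

lemma gamma_ratio (a b : ℝ) (ha : 0 < a) (hb : 0 < b) :
    Tendsto (fun n : ℕ => Real.Gamma (a + n) / Real.Gamma (b + n) * (n : ℝ) ^ (b - a))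
      atTop (𝓝 1) := by
  have h := (gamma_key a ha).div (gamma_key b hb) one_ne_zero
  rw [div_one] at h
  have hr : Tendsto (fun n : ℕ => (((n : ℝ) + 1) / n) ^ (b - a)) atTop (𝓝 1) := by
    have h1 : Tendsto (fun n : ℕ => ((n : ℝ) + 1) / n) atTop (𝓝 1) := by
      have h0 : Tendsto (fun n : ℕ => 1 + 1 / (n:ℝ)) atTop (𝓝 (1 + 0)) :=
        tendsto_const_nhds.add tendsto_one_div_atTop_nhds_zero_nat
      rw [add_zero] at h0
      refine h0.congr' ?_
      filter_upwards [eventually_gt_atTop 0] with n hn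
      have hn' : (0:ℝ) < n := by exact_mod_cast hn
      field_simp
    have := h1.rpow_const (p := b - a) (Or.inl one_ne_zero)
    rwa [Real.one_rpow] at this
  have hm := h.mul hr
  rw [mul_one] at hm
  rw [← tendsto_add_atTop_iff_nat 1]
  refine hm.congr' ?_
  filter_upwards [eventually_gt_atTop 0] with n hn
  have hn' : (0:ℝ) < n := by exact_mod_cast hn
  have hGa : (0:ℝ) < Real.Gamma ((n:ℝ) + 1) := Real.Gamma_pos_of_pos (by positivity)
  have hGb : (0:ℝ) < Real.Gamma (b + n + 1) := Real.Gamma_pos_of_pos (by positivity)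
  have hpa : (0:ℝ) < (n:ℝ) ^ a := Real.rpow_pos_of_pos hn' a
  have hpb : (0:ℝ) < (n:ℝ) ^ b := Real.rpow_pos_of_pos hn' b
  have hcast : a + ((n+1 : ℕ) : ℝ) = a + n + 1 := by push_cast; ring
  have hcast' : b + ((n+1 : ℕ) : ℝ) = b + n + 1 := by push_cast; ring
  have hcast'' : (((n+1 : ℕ) : ℝ)) = (n:ℝ) + 1 := by push_cast; ring
  rw [hcast, hcast', hcast'']
  have hdiv : (((n:ℝ) + 1) / n) ^ (b - a) = ((n:ℝ)+1) ^ (b-a) / (n:ℝ) ^ (b-a) :=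
    Real.div_rpow (by positivity) hn'.le (b - a)
  have hsub : (n:ℝ) ^ (b - a) = (n:ℝ) ^ b / (n:ℝ) ^ a := Real.rpow_sub hn' b a
  rw [hdiv, hsub]
  simp only [Pi.div_apply]
  field_simp

lemma aux_field (A B D E c f s g p1 p2 : ℝ) (hA : A ≠ 0) (hD : D ≠ 0) (hE : E ≠ 0)
    (hc : c ≠ 0) (hf : f ≠ 0) (hs : s ≠ 0) (hg : g ≠ 0) :
    s * c⁻¹ / g ^ 2 * (A / D * p1 * (B / E * p2))
      = A ^ 2 * B / (g ^ 2 * E * (D * A * (c * f) / s)) * f * (p1 * p2) := by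
  field_simp

theorem mft_ope_asymptotics (Δ : ℝ) (hΔ : 0 < Δ) (hΔ' : 0 < 2 * Δ - 1) :
    Tendsto (fun n : ℕ =>
        (Real.Gamma (Δ + n) ^ 2 * Real.Gamma (2 * Δ + n - 1) /
          (Real.Gamma Δ ^ 2 * Real.Gamma (1 + n) * Real.Gamma (2 * Δ + 2 * n - 1))) *
          4 ^ n * (n : ℝ) ^ (3 / 2 - 2 * Δ))
      atTop
      (nhds (Real.sqrt Real.pi * (4 : ℝ) ^ (1 - Δ) / Real.Gamma Δ ^ 2)) := by
  have hΔ2 : 0 < Δ - 1/2 := by linarith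
  have hC := (gamma_ratio Δ (Δ - 1/2) hΔ hΔ2).mul (gamma_ratio (2*Δ - 1) 1 hΔ' one_pos)
  rw [mul_one] at hC
  have hT := (tendsto_const_nhds
    (x := Real.sqrt Real.pi * (4:ℝ) ^ (1 - Δ) / Real.Gamma Δ ^ 2) (f := atTop)).mul hC
  rw [mul_one] at hT
  refine hT.congr' ?_
  filter_upwards [eventually_gt_atTop 0] with n hn
  have hn' : (0:ℝ) < n := by exact_mod_cast hn
  have hπ : (0:ℝ) < Real.sqrt Real.pi := Real.sqrt_pos.mpr Real.pi_pos
  have hGΔ : (0:ℝ) < Real.Gamma Δ := Real.Gamma_pos_of_pos hΔ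
  have hA : (0:ℝ) < Real.Gamma (Δ + n) := Real.Gamma_pos_of_pos (by positivity)
  have hD : (0:ℝ) < Real.Gamma (Δ - 1/2 + n) := Real.Gamma_pos_of_pos (by positivity)
  have hE : (0:ℝ) < Real.Gamma (1 + n) := Real.Gamma_pos_of_pos (by positivity)
  have hB : (0:ℝ) < Real.Gamma (2*Δ - 1 + n) := Real.Gamma_pos_of_pos (by positivity)
  -- duplication formula
  have hdup := Real.Gamma_mul_Gamma_add_half (Δ - 1/2 + n)
  rw [show Δ - 1/2 + (n:ℝ) + 1/2 = Δ + n by ring,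
    show 2*(Δ - 1/2 + (n:ℝ)) = 2*Δ + 2*n - 1 by ring] at hdup
  have e2 : (2:ℝ) ^ (2*Δ + 2*(n:ℝ) - 2) = (2:ℝ) ^ (2*Δ - 2) * 4 ^ n := by
    rw [show 2*Δ + 2*(n:ℝ) - 2 = (2*Δ - 2) + 2*(n:ℝ) by ring, Real.rpow_add two_pos]
    congr 1
    rw [show (2:ℝ)*(n:ℝ) = ((2*n : ℕ) : ℝ) by push_cast; ring, Real.rpow_natCast, pow_mul]
    norm_num
  have hinv : (2:ℝ) ^ (1 - (2*Δ + 2*(n:ℝ) - 1)) = ((2:ℝ) ^ (2*Δ - 2) * 4 ^ n)⁻¹ := by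
    rw [show 1 - (2*Δ + 2*(n:ℝ) - 1) = -(2*Δ + 2*(n:ℝ) - 2) by ring,
      Real.rpow_neg (le_of_lt two_pos), e2]
  have hG : Real.Gamma (2*Δ + 2*(n:ℝ) - 1)
      = Real.Gamma (Δ - 1/2 + n) * Real.Gamma (Δ + n) * ((2:ℝ) ^ (2*Δ - 2) * 4 ^ n)
        / Real.sqrt Real.pi := by
    rw [hinv] at hdup
    have h2 : (0:ℝ) < (2:ℝ) ^ (2*Δ - 2) * 4 ^ n := by positivity
    field_simp at hdup ⊢
    linarith [hdup]
  have e3' : (4:ℝ) ^ (1 - Δ) = ((2:ℝ) ^ (2*Δ - 2))⁻¹ := by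
    have : (4:ℝ) ^ (1 - Δ) * (2:ℝ) ^ (2*Δ - 2) = 1 := by
      rw [show (4:ℝ) = (2:ℝ) ^ ((2:ℕ):ℝ) by rw [Real.rpow_natCast]; norm_num,
        ← Real.rpow_mul (by norm_num : (0:ℝ) ≤ 2), ← Real.rpow_add two_pos,
        show ((2:ℕ):ℝ) * (1 - Δ) + (2*Δ - 2) = 0 by push_cast; ring, Real.rpow_zero]
    exact eq_inv_of_mul_eq_one_left this
  have e1 : (n:ℝ) ^ (3/2 - 2*Δ) = (n:ℝ) ^ (Δ - 1/2 - Δ) * (n:ℝ) ^ (1 - (2*Δ - 1)) := by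
    rw [← Real.rpow_add hn']; congr 1; ring
  have hp1 : (0:ℝ) < (n:ℝ) ^ (Δ - 1/2 - Δ) := Real.rpow_pos_of_pos hn' _
  have hp2 : (0:ℝ) < (n:ℝ) ^ (1 - (2*Δ - 1)) := Real.rpow_pos_of_pos hn' _
  have h2p : (0:ℝ) < (2:ℝ) ^ (2*Δ - 2) := Real.rpow_pos_of_pos two_pos _
  rw [show 2*Δ + (n:ℝ) - 1 = 2*Δ - 1 + n by ring, hG, e3', e1]
  have h4 : (0:ℝ) < (4:ℝ) ^ n := by positivity
  have hA' := hA.ne'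
  have hD' := hD.ne'
  have hE' := hE.ne'
  have hB' := hB.ne'
  have hGΔ' := hGΔ.ne'
  have hπ' := hπ.ne'
  have hp1' := hp1.ne'
  have hp2' := hp2.ne'
  have h2p' := h2p.ne'
  have h4' := h4.ne'
  exact aux_field _ _ _ _ _ _ _ _ _ _ hA' hD' hE' h2p' h4' hπ' hGΔ'
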